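/- Let q ≥ 2 and d ≥ 3 be integers. Then: (i) δ_{q,d}(0) = ln q; (ii) if q ≥ 3 or d is even, δ_{q,d}(1) = ρ_{q,d}(1) = ln(1 + (−1)^d·(q−1)^{1−d}); (iii) if q = 2 and d is odd, then for every x ∈ (1 − 1/d, 1] the function x̂ ↦ δ_{2,d}(x, x̂) is unbounded below on (0,1) (i.e., δ_{2,d}(x) = −∞), and δ_{2,d}(1 − 1/d) = ln(2d) − d·H₂(1/d). -/

import Mathlib

open Real Set Filter Polynomial
open scoped Classical Topology

/-- The entropy function `H_q`. -/
noncomputable def Hent (q : ℕ) (x : ℝ) : ℝ :=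
  x * Real.log (1 / x) + (1 - x) * Real.log (1 / (1 - x)) + x * Real.log ((q : ℝ) - 1)

/-- The information divergence function `D(x‖y)`. -/
noncomputable def Dkl (x y : ℝ) : ℝ :=
  x * Real.log (x / y) + (1 - x) * Real.log ((1 - x) / (1 - y))

/-- The function `ρ_{q,d}`. -/
noncomputable def rhoF (q d : ℕ) (x : ℝ) : ℝ :=
  Real.log (1 + ((q : ℝ) - 1) * (1 - (q : ℝ) * x / ((q : ℝ) - 1)) ^ d)

/-- The function `δ_{q,d}(x, x̂)`. -/
noncomputable def deltaTwo (q d : ℕ) (x xh : ℝ) : ℝ :=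
  (d : ℝ) * Dkl x xh + rhoF q d xh

/-- The function `δ_{q,d}(x) = inf_{x̂ ∈ (0,1)} δ_{q,d}(x, x̂)`. -/
noncomputable def deltaMin (q d : ℕ) (x : ℝ) : ℝ :=
  sInf ((fun xh => deltaTwo q d x xh) '' Set.Ioo 0 1)

/-- The asymptotic growth rate `ω_{q,c,d}`. -/
noncomputable def omegaF (q c d : ℕ) (x : ℝ) : ℝ :=
  Hent q x + ((c : ℝ) / (d : ℝ)) * (deltaMin q d x - Real.log (q : ℝ))

lemma sInf_image_Ioo_eq (f : ℝ → ℝ) (L : ℝ) (a : ℝ) (ha : a ∈ Icc (0:ℝ) 1)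
    (hlb : ∀ x ∈ Ioo (0:ℝ) 1, L ≤ f x)
    (hlim : Tendsto f (𝓝[Ioo (0:ℝ) 1] a) (𝓝 L)) :
    sInf (f '' Ioo 0 1) = L := by
  have hne : (Ioo (0:ℝ) 1).Nonempty := ⟨1/2, by norm_num⟩
  have hbdd : BddBelow (f '' Ioo (0:ℝ) 1) := ⟨L, by rintro _ ⟨x, hx, rfl⟩; exact hlb x hx⟩
  haveI : (𝓝[Ioo (0:ℝ) 1] a).NeBot := by
    refine mem_closure_iff_nhdsWithin_neBot.mp ?_
    rw [closure_Ioo (by norm_num : (0:ℝ) ≠ 1)]; exact ha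
  refine le_antisymm ?_ (le_csInf (hne.image f) (by rintro _ ⟨x, hx, rfl⟩; exact hlb x hx))
  refine ge_of_tendsto hlim ?_
  filter_upwards [self_mem_nhdsWithin] with x hx
  exact csInf_le hbdd ⟨x, hx, rfl⟩

lemma key1 (q d : ℕ) (hq : 2 ≤ q) {s : ℝ} (hs : s ∈ Ioo (0:ℝ) 1) :
    (q:ℝ) * (1 - s)^d ≤ 1 + ((q:ℝ)-1) * (1 - (q:ℝ)*s/((q:ℝ)-1))^d := by
  have hq2 : (2:ℝ) ≤ (q:ℝ) := by exact_mod_cast hq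
  have hQ0 : (0:ℝ) < (q:ℝ) - 1 := by linarith
  set t : ℝ := 1 - s with ht
  set u : ℝ := 1 - (q:ℝ)*s/((q:ℝ)-1) with hu
  have hts : (0:ℝ) < t := by simp only [ht]; linarith [hs.2]
  have hts1 : t < 1 := by simp only [ht]; linarith [hs.1]
  have hu1 : |u| ≤ 1 := by
    rw [abs_le]
    constructor
    · have h5 : (q:ℝ)*s/((q:ℝ)-1) ≤ 2 := by
        rw [div_le_iff₀ hQ0]; nlinarith [hs.2, hs.1]
      rw [hu]; linarith
    · have h5 : 0 ≤ (q:ℝ)*s/((q:ℝ)-1) :=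
        div_nonneg (mul_nonneg (by positivity) hs.1.le) hQ0.le
      rw [hu]; linarith
  have hgs1 := geom_sum_mul t d
  have hgs2 := geom_sum₂_mul t u d
  have h3 : ((q:ℝ)-1) * (t - u) = 1 - t := by
    rw [ht, hu]; field_simp; ring
  have key : 1 + ((q:ℝ)-1)*u^d - q*t^d
      = (1-t) * ∑ k ∈ Finset.range d, t^k*(1-u^(d-1-k)) := by
    have hsplit : ∑ k ∈ Finset.range d, t^k*(1-u^(d-1-k))
        = (∑ k ∈ Finset.range d, t^k) - ∑ k ∈ Finset.range d, t^k*u^(d-1-k) := by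
      rw [← Finset.sum_sub_distrib]
      exact Finset.sum_congr rfl (fun k _ => by ring)
    rw [hsplit]
    linear_combination hgs1 + ((q:ℝ)-1)*hgs2
      - (∑ k ∈ Finset.range d, t^k*u^(d-1-k)) * h3
  have hsum : (0:ℝ) ≤ ∑ k ∈ Finset.range d, t^k*(1-u^(d-1-k)) := by
    refine Finset.sum_nonneg fun k _ => mul_nonneg (pow_nonneg hts.le _) ?_
    have h4 : u^(d-1-k) ≤ 1 := by
      calc u^(d-1-k) ≤ |u^(d-1-k)| := le_abs_self _
        _ = |u|^(d-1-k) := abs_pow u _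
        _ ≤ 1 := pow_le_one₀ (abs_nonneg u) hu1
    linarith
  nlinarith [mul_nonneg (by linarith : (0:ℝ) ≤ 1 - t) hsum]

lemma lb0 (q d : ℕ) (hq : 2 ≤ q) {s : ℝ} (hs : s ∈ Ioo (0:ℝ) 1) :
    Real.log q ≤ deltaTwo q d 0 s := by
  have hq2 : (2:ℝ) ≤ (q:ℝ) := by exact_mod_cast hq
  have hkey := key1 q d hq hs
  have ht0 : (0:ℝ) < 1 - s := by linarith [hs.2]
  have hA0 : (0:ℝ) < 1 + ((q:ℝ)-1) * (1 - (q:ℝ)*s/((q:ℝ)-1))^d :=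
    lt_of_lt_of_le (by positivity) hkey
  have hlog : Real.log ((q:ℝ)*(1-s)^d)
      ≤ Real.log (1 + ((q:ℝ)-1) * (1 - (q:ℝ)*s/((q:ℝ)-1))^d) :=
    Real.log_le_log (by positivity) hkey
  rw [Real.log_mul (by positivity) (by positivity), Real.log_pow] at hlog
  simp only [deltaTwo, Dkl, rhoF, zero_mul, sub_zero, one_mul, zero_add]
  have h1 : Real.log (1/(1-s)) = - Real.log (1-s) := by
    rw [one_div, Real.log_inv]
  rw [h1]
  nlinarith [hlog]

lemma part1 (q d : ℕ) (hq : 2 ≤ q) : deltaMin q d 0 = Real.log q := by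
  have hq2 : (2:ℝ) ≤ (q:ℝ) := by exact_mod_cast hq
  have hcont : ContinuousAt (fun s => deltaTwo q d 0 s) 0 := by
    simp only [deltaTwo, Dkl, rhoF, zero_mul, sub_zero, one_mul, zero_add]
    refine ContinuousAt.add (ContinuousAt.mul continuousAt_const ?_) ?_
    · refine ContinuousAt.log ?_ (by norm_num)
      exact ContinuousAt.div continuousAt_const (by fun_prop) (by norm_num)
    · refine ContinuousAt.log ?_ ?_
      · fun_prop
      · norm_num
        positivity
  have hval : deltaTwo q d 0 0 = Real.log q := by
    simp only [deltaTwo, Dkl, rhoF, zero_mul, sub_zero, one_mul, zero_add]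
    norm_num
  refine sInf_image_Ioo_eq _ _ 0 (by norm_num) (fun x hx => lb0 q d hq hx) ?_
  have := hcont.continuousWithinAt (s := Ioo (0:ℝ) 1)
  rw [ContinuousWithinAt, hval] at this
  exact this

-- key inequality for part 2 : A(s) >= C s^d  where C = 1 + (q-1)*(-1/(q-1))^d
lemma key2 (q d : ℕ) (hq : 2 ≤ q) (hd : 2 ≤ d) {s : ℝ} (hs : s ∈ Ioo (0:ℝ) 1) :
    (1 + ((q:ℝ)-1) * (-1/((q:ℝ)-1))^d) * s^d
      ≤ 1 + ((q:ℝ)-1) * (1 - (q:ℝ)*s/((q:ℝ)-1))^d := by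
  have hq2 : (2:ℝ) ≤ (q:ℝ) := by exact_mod_cast hq
  have hQ0 : (0:ℝ) < (q:ℝ) - 1 := by linarith
  have hQ1 : (1:ℝ) ≤ (q:ℝ) - 1 := by linarith
  set u : ℝ := 1 - (q:ℝ)*s/((q:ℝ)-1) with hu
  set w : ℝ := -1/((q:ℝ)-1) with hw
  have hw1 : (-1:ℝ) ≤ w := by
    rw [hw, neg_div, neg_le_neg_iff, div_le_one hQ0]; exact hQ1
  have huw : w ≤ u := by
    have h0 : u - w = ((q:ℝ) - (q:ℝ)*s)/((q:ℝ)-1) := by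
      rw [hu, hw]; field_simp; ring
    have h1 : (0:ℝ) ≤ u - w := by
      rw [h0]; exact div_nonneg (by nlinarith [hs.2]) hQ0.le
    linarith
  have hu1 : u ≤ 1 := by
    rw [hu]
    have h5 : 0 ≤ (q:ℝ)*s/((q:ℝ)-1) :=
      div_nonneg (mul_nonneg (by positivity) hs.1.le) hQ0.le
    linarith
  have huabs : |u| ≤ 1 := abs_le.mpr ⟨by linarith, hu1⟩
  have hwabs : |w| = 1/((q:ℝ)-1) := by
    rw [hw, abs_div, abs_neg, abs_one, abs_of_pos hQ0]
  set Q : ℝ := (q:ℝ) - 1 with hQ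
  set S1 : ℝ := ∑ k ∈ Finset.range d, s^k with hS1
  set S2 : ℝ := ∑ k ∈ Finset.range d, u^k * (s*w)^(d-1-k) with hS2
  have hgs1 := geom_sum_mul s d
  have hgs2 := geom_sum₂_mul u (s*w) d
  have h3 : u - s*w = 1 - s := by
    rw [hu, hw]; field_simp; simp only [hQ]; ring
  have key : 1 + Q*u^d - (1 + Q*w^d)*s^d = (1-s) * (S1 + Q * S2) := by
    rw [hS1, hS2]
    linear_combination hgs1 - Q*hgs2 + Q*S2*h3
  have hreflect : S2 = ∑ j ∈ Finset.range d, u^(d-1-j) * (s*w)^j := by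
    rw [hS2, ← Finset.sum_range_reflect]
    refine Finset.sum_congr rfl fun j hj => ?_
    have hj' : j ≤ d-1 := Nat.le_sub_one_of_lt (Finset.mem_range.mp hj)
    rw [Nat.sub_sub_self hj']
  have hterm : ∀ j, 0 ≤ 1 + Q * w^j * u^(d-1-j) := by
    intro j
    rcases Nat.eq_zero_or_pos j with hj0 | hj1
    · subst hj0
      simp only [pow_zero, mul_one, Nat.sub_zero]
      rcases Nat.even_or_odd (d-1) with he | ho
      · have : 0 ≤ u^(d-1) := he.pow_nonneg u
        nlinarith
      · have h6 : w^(d-1) ≤ u^(d-1) := ho.strictMono_pow.monotone huw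
        have h7 : w^(d-1) = -(1/Q)^(d-1) := by
          rw [hw, hQ, neg_div, Odd.neg_pow ho]
        have h8 : (1/Q)^(d-1) ≤ (1/Q)^1 := by
          apply pow_le_pow_of_le_one (by positivity)
          · rw [div_le_one hQ0]; exact hQ1
          · omega
        have h9 : Q * w^(d-1) ≥ -1 := by
          rw [h7]
          have : Q * (1/Q)^(d-1) ≤ Q * (1/Q)^1 :=
            mul_le_mul_of_nonneg_left h8 (by linarith)
          have hQne : Q ≠ 0 := ne_of_gt hQ0
          rw [pow_one] at this
          rw [mul_div_cancel₀ 1 hQne] at this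
          nlinarith
        nlinarith [mul_le_mul_of_nonneg_left h6 (le_of_lt hQ0)]
    · have habs : |Q * w^j * u^(d-1-j)| ≤ 1 := by
        rw [abs_mul, abs_mul, abs_pow, abs_pow, hwabs, abs_of_pos hQ0]
        have h8 : (1/Q)^j ≤ 1/Q := by
          calc (1/Q)^j ≤ (1/Q)^1 := by
                apply pow_le_pow_of_le_one (by positivity)
                · rw [div_le_one hQ0]; exact hQ1
                · omega
            _ = 1/Q := pow_one _
        have h9 : |u|^(d-1-j) ≤ 1 := pow_le_one₀ (abs_nonneg u) huabs
        calc Q * (1/Q)^j * |u|^(d-1-j) ≤ Q * (1/Q) * 1 := by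
              apply mul_le_mul (mul_le_mul_of_nonneg_left h8 (le_of_lt hQ0)) h9
                (by positivity) (by positivity)
          _ = 1 := by field_simp
      have := abs_le.mp habs
      linarith [this.1]
  have hsum : 0 ≤ S1 + Q * S2 := by
    rw [hreflect, hS1, Finset.mul_sum, ← Finset.sum_add_distrib]
    refine Finset.sum_nonneg fun j _ => ?_
    have : s^j + Q * (u^(d-1-j) * (s*w)^j) = s^j * (1 + Q * w^j * u^(d-1-j)) := by
      rw [mul_pow]; ring
    rw [this]
    exact mul_nonneg (pow_nonneg hs.1.le _) (hterm j)
  linarith [mul_nonneg (by linarith [hs.2] : (0:ℝ) ≤ 1 - s) hsum, key]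

lemma Cpos (q d : ℕ) (hq : 2 ≤ q) (hd : 2 ≤ d) (h : 3 ≤ q ∨ Even d) :
    0 < 1 + ((q:ℝ)-1)*(-1/((q:ℝ)-1))^d := by
  have hq2 : (2:ℝ) ≤ (q:ℝ) := by exact_mod_cast hq
  have hQ0 : (0:ℝ) < (q:ℝ) - 1 := by linarith
  rcases h with h3 | he
  · have hq3 : (3:ℝ) ≤ (q:ℝ) := by exact_mod_cast h3
    have hQ2 : (2:ℝ) ≤ (q:ℝ) - 1 := by linarith
    have h1 : (-1/((q:ℝ)-1))^d ≥ -((1/((q:ℝ)-1))^d) := by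
      have := neg_abs_le ((-1/((q:ℝ)-1))^d)
      have h2 : |(-1/((q:ℝ)-1))^d| = (1/((q:ℝ)-1))^d := by
        rw [abs_pow, abs_div, abs_neg, abs_one, abs_of_pos hQ0]
      linarith [h2 ▸ this]
    have h8 : (1/((q:ℝ)-1))^d ≤ (1/((q:ℝ)-1))^2 := by
      apply pow_le_pow_of_le_one (by positivity)
      · rw [div_le_one hQ0]; linarith
      · omega
    have h9 : ((q:ℝ)-1) * (1/((q:ℝ)-1))^2 = 1/((q:ℝ)-1) := by
      field_simp
    have h10 : 1/((q:ℝ)-1) ≤ 1/2 := by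
      rw [div_le_div_iff₀ hQ0 (by norm_num)]; linarith
    nlinarith [mul_le_mul_of_nonneg_left h8 hQ0.le]
  · have : 0 ≤ (-1/((q:ℝ)-1))^d := he.pow_nonneg _
    nlinarith

lemma lb1 (q d : ℕ) (hq : 2 ≤ q) (hd : 2 ≤ d) (h : 3 ≤ q ∨ Even d)
    {s : ℝ} (hs : s ∈ Ioo (0:ℝ) 1) :
    rhoF q d 1 ≤ deltaTwo q d 1 s := by
  have hq2 : (2:ℝ) ≤ (q:ℝ) := by exact_mod_cast hq
  have hQ0 : (0:ℝ) < (q:ℝ) - 1 := by linarith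
  have harg : 1 - (q:ℝ)*1/((q:ℝ)-1) = -1/((q:ℝ)-1) := by
    field_simp; ring
  have hC := Cpos q d hq hd h
  have hkey := key2 q d hq hd hs
  have hCs : (0:ℝ) < (1 + ((q:ℝ)-1) * (-1/((q:ℝ)-1))^d) * s^d :=
    mul_pos hC (pow_pos hs.1 d)
  have hA0 : (0:ℝ) < 1 + ((q:ℝ)-1) * (1 - (q:ℝ)*s/((q:ℝ)-1))^d :=
    lt_of_lt_of_le hCs hkey
  have hlog : Real.log ((1 + ((q:ℝ)-1) * (-1/((q:ℝ)-1))^d) * s^d)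
      ≤ Real.log (1 + ((q:ℝ)-1) * (1 - (q:ℝ)*s/((q:ℝ)-1))^d) :=
    Real.log_le_log hCs hkey
  rw [Real.log_mul (ne_of_gt hC) (pow_ne_zero _ (ne_of_gt hs.1)), Real.log_pow] at hlog
  simp only [deltaTwo, Dkl, rhoF, sub_self, zero_mul, add_zero, one_mul, harg]
  have h1 : Real.log (1/s) = - Real.log s := by rw [one_div, Real.log_inv]
  rw [h1]
  linarith

lemma part2 (q d : ℕ) (hq : 2 ≤ q) (hd : 2 ≤ d) (h : 3 ≤ q ∨ Even d) :
    deltaMin q d 1 = rhoF q d 1 ∧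
    rhoF q d 1 = Real.log (1 + (-1 : ℝ) ^ d * ((q : ℝ) - 1) ^ ((1 : ℤ) - (d : ℤ))) := by
  have hq2 : (2:ℝ) ≤ (q:ℝ) := by exact_mod_cast hq
  have hQ0 : (0:ℝ) < (q:ℝ) - 1 := by linarith
  have harg : 1 - (q:ℝ)/((q:ℝ)-1) = -1/((q:ℝ)-1) := by field_simp; ring
  have hC := Cpos q d hq hd h
  constructor
  · have hcont : ContinuousAt (fun s => deltaTwo q d 1 s) 1 := by
      simp only [deltaTwo, Dkl, rhoF, sub_self, zero_mul, add_zero, one_mul]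
      refine ContinuousAt.add (ContinuousAt.mul continuousAt_const ?_) ?_
      · refine ContinuousAt.log ?_ (by norm_num)
        exact ContinuousAt.div continuousAt_const (by fun_prop) (by norm_num)
      · refine ContinuousAt.log (by fun_prop) ?_
        rw [show (q:ℝ)*1 = q by ring, harg]
        exact ne_of_gt hC
    have hval : deltaTwo q d 1 1 = rhoF q d 1 := by
      simp only [deltaTwo, Dkl, rhoF, sub_self, zero_mul, add_zero, one_mul]
      norm_num
    refine sInf_image_Ioo_eq _ _ 1 (by norm_num) (fun x hx => lb1 q d hq hd h hx) ?_
    have := hcont.continuousWithinAt (s := Ioo (0:ℝ) 1)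
    rw [ContinuousWithinAt, hval] at this
    exact this
  · unfold rhoF
    congr 1
    rw [show (q:ℝ)*1 = q by ring, harg]
    have hQne : ((q:ℝ)-1) ≠ 0 := ne_of_gt hQ0
    rw [div_pow, neg_one_pow_eq_pow_mod_two]
    rw [zpow_sub₀ hQne, zpow_one, zpow_natCast]
    rw [neg_one_pow_eq_pow_mod_two]
    ring

lemma bern (m : ℕ) (v : ℝ) (hv : 0 ≤ v) : (1+v)^m * (1 - m*v) ≤ 1 := by
  induction m with
  | zero => norm_num
  | succ n ih =>
    rcases le_or_gt (1 - ((n:ℝ)+1)*v) 0 with h | h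
    · have h1 : (1+v)^(n+1) * (1 - ((n:ℝ)+1)*v) ≤ 0 :=
        mul_nonpos_of_nonneg_of_nonpos (by positivity) h
      push_cast
      linarith
    · have h2 : (1+v) * (1 - ((n:ℝ)+1)*v) ≤ 1 - (n:ℝ)*v := by
        have hnn : (0:ℝ) ≤ ((n:ℝ)+1)*v^2 := by positivity
        nlinarith
      have h3 : (1+v)^(n+1) * (1 - ((n:ℝ)+1)*v)
          = (1+v)^n * ((1+v) * (1 - ((n:ℝ)+1)*v)) := by ring
      have h4 : (1+v)^n * ((1+v) * (1 - ((n:ℝ)+1)*v)) ≤ (1+v)^n * (1 - (n:ℝ)*v) :=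
        mul_le_mul_of_nonneg_left h2 (by positivity)
      push_cast
      push_cast at h3 h4
      linarith

-- s^(m+1) * ((m+3) s - (m+2)) ≤ (2s-1)^(m+2)   [d = m+3]
lemma claim2 (m : ℕ) (hm : Even m) {s : ℝ} (hs0 : 0 ≤ s) (hs1 : s ≤ 1) :
    s^(m+1) * (((m:ℝ)+3)*s - ((m:ℝ)+2)) ≤ (2*s-1)^(m+2) := by
  rcases le_or_gt (((m:ℝ)+3)*s - ((m:ℝ)+2)) 0 with h | h
  · have h1 : s^(m+1) * (((m:ℝ)+3)*s - ((m:ℝ)+2)) ≤ 0 :=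
      mul_nonpos_of_nonneg_of_nonpos (by positivity) h
    have h2 : (0:ℝ) ≤ (2*s-1)^(m+2) := (hm.add even_two).pow_nonneg _
    linarith
  · -- here s > (m+2)/(m+3) ≥ 1/2, so a := 2s-1 > 0
    have ha : (0:ℝ) < 2*s - 1 := by nlinarith
    set a : ℝ := 2*s - 1 with haa
    set e : ℝ := 1 - s with hee
    have he0 : 0 ≤ e := by simp only [hee]; linarith
    set v : ℝ := e / a with hvv
    have hv0 : 0 ≤ v := div_nonneg he0 ha.le
    have hb := bern (m+1) v hv0
    -- multiply by a^(m+2)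
    have hb2 : a^(m+2) * ((1+v)^(m+1) * (1 - ((m:ℝ)+1)*v)) ≤ a^(m+2) := by
      calc a^(m+2) * ((1+v)^(m+1) * (1 - ((m:ℝ)+1)*v)) ≤ a^(m+2) * 1 := by
            apply mul_le_mul_of_nonneg_left _ (by positivity)
            have : ((m:ℝ)+1) = ((m+1 : ℕ) : ℝ) := by push_cast; ring
            rw [this]; exact hb
        _ = a^(m+2) := mul_one _
    have hav : a * (1+v) = s := by
      rw [hvv, hee, haa]; field_simp [show (2*s-1) ≠ 0 from ha.ne']; ring
    have hav2 : a * (1 - ((m:ℝ)+1)*v) = ((m:ℝ)+3)*s - ((m:ℝ)+2) := by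
      rw [hvv, hee, haa]; field_simp [show (2*s-1) ≠ 0 from ha.ne']; ring
    have hexp : a^(m+2) * ((1+v)^(m+1) * (1 - ((m:ℝ)+1)*v))
        = (a*(1+v))^(m+1) * (a * (1 - ((m:ℝ)+1)*v)) := by
      rw [mul_pow]; ring
    rw [hexp, hav, hav2] at hb2
    exact hb2

lemma F_hasDeriv (m : ℕ) (x : ℝ) :
    HasDerivAt (fun y : ℝ => 1 - (2*y-1)^(m+3) - 2*((m:ℝ)+3)*(1-y)*y^(m+2))
      (-(((m:ℝ)+3) * (2*x-1)^(m+2) * 2)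
        - 2*((m:ℝ)+3)*((-1)*x^(m+2) + (1-x)*(((m:ℝ)+2)*x^(m+1)))) x := by
  have h1 : HasDerivAt (fun y : ℝ => 2*y-1) 2 x := by
    simpa using ((hasDerivAt_id x).const_mul (2:ℝ)).sub_const (1:ℝ)
  have h2 : HasDerivAt (fun y : ℝ => (2*y-1)^(m+3))
      (((m:ℝ)+3) * (2*x-1)^(m+2) * 2) x := by
    have := h1.pow (m+3)
    simp only [show m+3-1 = m+2 by omega] at this; push_cast at this; exact this
  have h3 : HasDerivAt (fun y : ℝ => (1-y)*y^(m+2))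
      ((-1)*x^(m+2) + (1-x)*(((m:ℝ)+2)*x^(m+1))) x := by
    have h4 : HasDerivAt (fun y : ℝ => 1-y) (-1) x := by
      exact (hasDerivAt_id x).const_sub 1
    have h5 : HasDerivAt (fun y : ℝ => y^(m+2)) (((m:ℝ)+2)*x^(m+1)) x := by
      have := hasDerivAt_pow (m+2) x
      simpa [show m+2-1 = m+1 by omega] using this
    exact h4.mul h5
  have h6 := ((hasDerivAt_const x (1:ℝ)).sub h2).sub (h3.const_mul (2*((m:ℝ)+3)))
  have hfe : (fun y : ℝ => 1 - (2*y-1)^(m+3) - 2*((m:ℝ)+3)*((1-y)*y^(m+2)))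
      = (fun y : ℝ => 1 - (2*y-1)^(m+3) - 2*((m:ℝ)+3)*(1-y)*y^(m+2)) := by
    funext y; ring
  replace h6 : HasDerivAt (fun y : ℝ => 1 - (2*y-1)^(m+3) - 2*((m:ℝ)+3)*((1-y)*y^(m+2))) _ x := h6
  rw [hfe] at h6
  convert h6 using 1
  ring

lemma F_nonneg (m : ℕ) (hm : Even m) {s : ℝ} (hs0 : 0 ≤ s) (hs1 : s ≤ 1) :
    2*((m:ℝ)+3)*(1-s)*s^(m+2) ≤ 1 - (2*s-1)^(m+3) := by
  set F : ℝ → ℝ := fun y : ℝ => 1 - (2*y-1)^(m+3) - 2*((m:ℝ)+3)*(1-y)*y^(m+2) with hF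
  have hanti : AntitoneOn F (Icc (0:ℝ) 1) := by
    apply antitoneOn_of_deriv_nonpos (convex_Icc 0 1)
    · exact (Continuous.continuousOn (by fun_prop))
    · intro x hx
      exact (F_hasDeriv m x).differentiableAt.differentiableWithinAt
    · intro x hx
      rw [interior_Icc] at hx
      rw [(F_hasDeriv m x).deriv]
      have hc := claim2 m hm hx.1.le hx.2.le
      have hB : -(((m:ℝ)+3) * (2*x-1)^(m+2) * 2)
            - 2*((m:ℝ)+3)*((-1)*x^(m+2) + (1-x)*(((m:ℝ)+2)*x^(m+1)))
          = (-2*((m:ℝ)+3)) * ((2*x-1)^(m+2) - x^(m+1)*(((m:ℝ)+3)*x - ((m:ℝ)+2))) := by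
        ring
      rw [hB]
      have hm0 : (0:ℝ) ≤ (m:ℝ) := Nat.cast_nonneg m
      exact mul_nonpos_of_nonpos_of_nonneg (by linarith) (sub_nonneg.mpr hc)
  have h1 : F 1 ≤ F s := hanti (mem_Icc.mpr ⟨hs0, hs1⟩) (mem_Icc.mpr ⟨zero_le_one, le_refl 1⟩) hs1
  have h2 : F 1 = 0 := by norm_num [hF]
  have h3 : F s = 1 - (2*s-1)^(m+3) - 2*((m:ℝ)+3)*(1-s)*s^(m+2) := rfl
  linarith [h2 ▸ h1, h3 ▸ h1]

lemma rho2 (d : ℕ) (s : ℝ) : rhoF 2 d s = Real.log (1 + (1 - 2*s)^d) := by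
  unfold rhoF
  norm_num

lemma part3a (d : ℕ) (hd : 3 ≤ d) (hodd : Odd d) :
    ∀ x ∈ Ioc (1 - 1/(d:ℝ)) 1, ∀ M : ℝ, ∃ xh ∈ Ioo (0:ℝ) 1, deltaTwo 2 d x xh < M := by
  intro x hx M
  have hd0 : (0:ℝ) < (d:ℝ) := by exact_mod_cast (by omega : 0 < d)
  have hd3 : (3:ℝ) ≤ (d:ℝ) := by exact_mod_cast hd
  have hdinv : 1/(d:ℝ) ≤ 1/3 := by
    rw [div_le_div_iff₀ hd0 (by norm_num)]; linarith
  have hx0 : (0:ℝ) < x := by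
    have := hx.1; linarith
  have hx1 : x ≤ 1 := hx.2
  have h1mx : (d:ℝ)*(1-x) < 1 := by
    have h5 : 1 - x < 1/(d:ℝ) := by linarith [hx.1]
    calc (d:ℝ)*(1-x) < (d:ℝ)*(1/(d:ℝ)) := by
          apply mul_lt_mul_of_pos_left h5 hd0
      _ = 1 := by field_simp
  set α : ℝ := 1 - (d:ℝ)*(1-x) with hα
  have hα0 : 0 < α := by simp only [hα]; linarith
  set C0 : ℝ := (d:ℝ)*Real.log 2 + Real.log (2*(d:ℝ)) with hC0
  set ε : ℝ := min (1/2) (Real.exp ((M - 1 - C0)/α)) with hε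
  have hε0 : 0 < ε := lt_min (by norm_num) (Real.exp_pos _)
  have hε12 : ε ≤ 1/2 := min_le_left _ _
  have hlogε : α * Real.log ε ≤ M - 1 - C0 := by
    have h1 : Real.log ε ≤ (M - 1 - C0)/α := by
      calc Real.log ε ≤ Real.log (Real.exp ((M-1-C0)/α)) :=
            Real.log_le_log hε0 (min_le_right _ _)
        _ = (M-1-C0)/α := Real.log_exp _
    calc α * Real.log ε ≤ α * ((M-1-C0)/α) := mul_le_mul_of_nonneg_left h1 hα0.le
      _ = M - 1 - C0 := by field_simp
  have hlogεneg : Real.log ε ≤ 0 := Real.log_nonpos hε0.le (by linarith)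
  refine ⟨1 - ε, ⟨by linarith, by linarith⟩, ?_⟩
  have h1me : (0:ℝ) < 1 - ε := by linarith
  -- T1 bound
  have hT1 : x * Real.log (x/(1-ε)) ≤ Real.log 2 := by
    have hdiv : x/(1-ε) ≤ 2 := by
      rw [div_le_iff₀ h1me]; linarith
    calc x * Real.log (x/(1-ε)) ≤ x * Real.log 2 :=
          mul_le_mul_of_nonneg_left (Real.log_le_log (div_pos hx0 h1me) hdiv) hx0.le
      _ ≤ 1 * Real.log 2 :=
          mul_le_mul_of_nonneg_right hx1 (Real.log_nonneg one_le_two)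
      _ = Real.log 2 := one_mul _
  -- T2 bound
  have hT2 : (1-x) * Real.log ((1-x)/(1-(1-ε))) ≤ (1-x) * (-Real.log ε) := by
    have h6 : (1:ℝ) - (1-ε) = ε := by ring
    rw [h6]
    rcases eq_or_lt_of_le (by linarith : (0:ℝ) ≤ 1 - x) with heq | hlt
    · rw [← heq]; simp
    · have h7 : Real.log ((1-x)/ε) = Real.log (1-x) - Real.log ε :=
        Real.log_div (ne_of_gt hlt) (ne_of_gt hε0)
      have h8 : Real.log (1-x) ≤ 0 := Real.log_nonpos hlt.le (by linarith)
      have h9 : Real.log ((1-x)/ε) ≤ -Real.log ε := by rw [h7]; linarith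
      exact mul_le_mul_of_nonneg_left h9 hlt.le
  -- rho bound
  have hrho : rhoF 2 d (1-ε) ≤ Real.log (2*(d:ℝ)) + Real.log ε := by
    rw [rho2]
    have h6 : (1:ℝ) - 2*(1-ε) = -(1-2*ε) := by ring
    rw [h6, Odd.neg_pow hodd]
    have h7 : (0:ℝ) ≤ 1-2*ε + 1 := by linarith
    have hb := one_add_mul_le_pow (by linarith : (-2:ℝ) ≤ -(2*ε)) d
    have h8 : 1 - (1-2*ε)^d ≤ 2*(d:ℝ)*ε := by
      have : (1:ℝ) + (d:ℝ)*(-(2*ε)) ≤ (1 + -(2*ε))^d := hb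
      have h9 : (1 + -(2*ε)) = 1 - 2*ε := by ring
      rw [h9] at this
      nlinarith
    have h10 : (0:ℝ) < 1 - (1-2*ε)^d := by
      have h11 : (1-2*ε)^d < 1 := by
        apply pow_lt_one₀ (by linarith) (by linarith) (by omega)
      linarith
    calc Real.log (1 + -(1-2*ε)^d) = Real.log (1 - (1-2*ε)^d) := by ring_nf
      _ ≤ Real.log (2*(d:ℝ)*ε) := Real.log_le_log h10 h8
      _ = Real.log (2*(d:ℝ)) + Real.log ε :=
          Real.log_mul (by positivity) (ne_of_gt hε0)
  -- combine
  have hexp : deltaTwo 2 d x (1-ε)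
      = (d:ℝ) * (x * Real.log (x/(1-ε)) + (1-x) * Real.log ((1-x)/(1-(1-ε)))) + rhoF 2 d (1-ε) := by
    rfl
  rw [hexp]
  have hT1' : (d:ℝ) * (x * Real.log (x/(1-ε))) ≤ (d:ℝ) * Real.log 2 :=
    mul_le_mul_of_nonneg_left hT1 hd0.le
  have hT2' : (d:ℝ) * ((1-x) * Real.log ((1-x)/(1-(1-ε)))) ≤ (1-α) * (-Real.log ε) := by
    have := mul_le_mul_of_nonneg_left hT2 hd0.le
    have h12 : (d:ℝ) * ((1-x) * (-Real.log ε)) = (1-α) * (-Real.log ε) := by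
      rw [hα]; ring
    linarith [h12 ▸ this]
  nlinarith [hT1', hT2', hrho, hlogε]

lemma part3b (d : ℕ) (hd : 3 ≤ d) (hodd : Odd d) :
    deltaMin 2 d (1 - 1/(d:ℝ)) = Real.log (2*(d:ℝ)) - (d:ℝ) * Hent 2 (1/(d:ℝ)) := by
  have hd0 : (0:ℝ) < (d:ℝ) := by exact_mod_cast (by omega : 0 < d)
  have hd3 : (3:ℝ) ≤ (d:ℝ) := by exact_mod_cast hd
  have hdinv : 1/(d:ℝ) ≤ 1/3 := by
    rw [div_le_div_iff₀ hd0 (by norm_num)]; linarith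
  set D : ℝ := (d:ℝ) with hD
  set x0 : ℝ := 1 - 1/D with hx0
  have hx00 : 0 < x0 := by simp only [hx0]; linarith
  have hx01 : x0 < 1 := by
    simp only [hx0]
    have : 0 < 1/D := by positivity
    linarith
  set L : ℝ := Real.log (2*D) - D * Hent 2 (1/D) with hL
  -- value of L
  have hLval : L = Real.log 2 + (D-1) * Real.log x0 := by
    rw [hL, Hent]
    have e1 : ((2:ℕ):ℝ) - 1 = 1 := by norm_num
    rw [e1, Real.log_one, mul_zero, add_zero]
    rw [one_div_one_div]
    have e2 : Real.log (1/(1 - 1/D)) = - Real.log x0 := by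
      rw [one_div, Real.log_inv, hx0]
    rw [e2]
    have e3 : Real.log (2*D) = Real.log 2 + Real.log D :=
      Real.log_mul (by norm_num) (ne_of_gt hd0)
    rw [e3]
    field_simp
    ring
  -- positivity of A(s)
  have hApos : ∀ s : ℝ, s ∈ Ioo (0:ℝ) 1 → (0:ℝ) < 1 + (1 - 2*s)^d := by
    intro s hs
    have h1 : |(1-2*s)^d| < 1 := by
      rw [abs_pow]
      apply pow_lt_one₀ (abs_nonneg _) _ (by omega)
      rw [abs_lt]; constructor <;> [linarith [hs.2]; linarith [hs.1]]
    have := (abs_lt.mp h1).1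
    linarith
  -- the F inequality in d-form
  obtain ⟨m, rfl⟩ : ∃ m, d = m + 3 := ⟨d - 3, by omega⟩
  have hmeven : Even m := by
    rcases Nat.even_or_odd m with h | h
    · exact h
    · exfalso
      have : Even (m+3) := by
        rcases h with ⟨j, hj⟩
        exact ⟨j+2, by omega⟩
      exact (Nat.not_even_iff_odd.mpr hodd) this
  have hFkey : ∀ s : ℝ, s ∈ Ioo (0:ℝ) 1 →
      2*D*((1-s)*s^(m+2)) ≤ 1 + (1 - 2*s)^(m+3) := by
    intro s hs
    have := F_nonneg m hmeven hs.1.le hs.2.le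
    have hneg : (1-2*s)^(m+3) = -((2*s-1)^(m+3)) := by
      rw [show (1-2*s) = -(2*s-1) by ring, Odd.neg_pow hodd]
    rw [hneg]
    have hDm : D = (m:ℝ)+3 := by rw [hD]; push_cast; ring
    rw [hDm]
    linarith
  -- lower bound
  have hlb : ∀ s ∈ Ioo (0:ℝ) 1, L ≤ deltaTwo 2 (m+3) x0 s := by
    intro s hs
    have hs0 := hs.1
    have hs1 := hs.2
    have hA := hApos s hs
    have hRpos : (0:ℝ) < 2*D*((1-s)*s^(m+2)) := by
      have : (0:ℝ) < s^(m+2) := pow_pos hs0 _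
      have h2 : (0:ℝ) < 1 - s := by linarith
      positivity
    have hAge : Real.log (2*D*((1-s)*s^(m+2))) ≤ Real.log (1 + (1-2*s)^(m+3)) :=
      Real.log_le_log hRpos (hFkey s hs)
    have hsplit : Real.log (2*D*((1-s)*s^(m+2)))
        = Real.log 2 + Real.log D + Real.log (1-s) + ((m:ℝ)+2) * Real.log s := by
      have h1s : (0:ℝ) < 1 - s := by linarith [hs.2]
      rw [Real.log_mul (by positivity) (mul_ne_zero (ne_of_gt h1s) (pow_ne_zero _ (ne_of_gt hs0))),
          Real.log_mul (by norm_num) (ne_of_gt hd0),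
          Real.log_mul (ne_of_gt (by linarith [hs.2] : (0:ℝ) < 1-s)) (pow_ne_zero _ (ne_of_gt hs0)),
          Real.log_pow]
      push_cast
      ring
    have hδ : deltaTwo 2 (m+3) x0 s
        = (D-1) * (Real.log x0 - Real.log s) + (- Real.log D - Real.log (1-s))
          + Real.log (1 + (1-2*s)^(m+3)) := by
      rw [deltaTwo, Dkl, rho2]
      have e4 : (1:ℝ) - x0 = 1/D := by rw [hx0]; ring
      rw [e4]
      have e5 : Real.log (x0/s) = Real.log x0 - Real.log s :=
        Real.log_div (ne_of_gt hx00) (ne_of_gt hs0)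
      have e6 : Real.log ((1/D)/(1-s)) = - Real.log D - Real.log (1-s) := by
        rw [Real.log_div (by positivity) (ne_of_gt (by linarith [hs.2] : (0:ℝ) < 1-s)),
          one_div, Real.log_inv]
      rw [e5, e6]
      have e7 : ((m+3:ℕ):ℝ) = D := by rw [hD]
      rw [e7]
      have e8 : D * (x0 * (Real.log x0 - Real.log s) + 1/D * (-Real.log D - Real.log (1-s)))
          = (D-1) * (Real.log x0 - Real.log s) + (-Real.log D - Real.log (1-s)) := by
        rw [hx0]
        field_simp
        try ring
      rw [e8]
    rw [hδ, hLval]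
    have hm2 : ((m:ℝ)+2) = D - 1 := by rw [hD]; push_cast; ring
    rw [hm2] at hsplit
    linarith
  -- limit
  set B : ℝ → ℝ := fun s => ∑ k ∈ Finset.range (m+3), (2*s-1)^k with hB
  have hAB : ∀ s : ℝ, 1 + (1 - 2*s)^(m+3) = (1-s) * (2 * B s) := by
    intro s
    have hg := geom_sum_mul (2*s-1) (m+3)
    have hneg : (1-2*s)^(m+3) = -((2*s-1)^(m+3)) := by
      rw [show (1-2*s) = -(2*s-1) by ring, Odd.neg_pow hodd]
    rw [hneg, hB]
    linear_combination hg
  have hBpos : ∀ s : ℝ, s ∈ Ioo (0:ℝ) 1 → 0 < B s := by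
    intro s hs
    have hA := hApos s hs
    have h2 := hAB s
    nlinarith [hs.2]
  have hB1 : B 1 = ((m:ℝ)+3) := by rw [hB]; norm_num
  set g : ℝ → ℝ := fun s =>
    (D-1) * (Real.log x0 - Real.log s) - Real.log D + Real.log (2 * B s) with hg
  have heqg : ∀ s ∈ Ioo (0:ℝ) 1, deltaTwo 2 (m+3) x0 s = g s := by
    intro s hs
    have hs0 := hs.1
    have hA := hApos s hs
    have hBp := hBpos s hs
    have hδ : deltaTwo 2 (m+3) x0 s
        = (D-1) * (Real.log x0 - Real.log s) + (- Real.log D - Real.log (1-s))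
          + Real.log (1 + (1-2*s)^(m+3)) := by
      rw [deltaTwo, Dkl, rho2]
      have e4 : (1:ℝ) - x0 = 1/D := by rw [hx0]; ring
      rw [e4]
      have e5 : Real.log (x0/s) = Real.log x0 - Real.log s :=
        Real.log_div (ne_of_gt hx00) (ne_of_gt hs0)
      have e6 : Real.log ((1/D)/(1-s)) = - Real.log D - Real.log (1-s) := by
        rw [Real.log_div (by positivity) (ne_of_gt (by linarith [hs.2] : (0:ℝ) < 1-s)),
          one_div, Real.log_inv]
      rw [e5, e6]
      have e7 : ((m+3:ℕ):ℝ) = D := by rw [hD]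
      rw [e7]
      have e8 : D * (x0 * (Real.log x0 - Real.log s) + 1/D * (-Real.log D - Real.log (1-s)))
          = (D-1) * (Real.log x0 - Real.log s) + (-Real.log D - Real.log (1-s)) := by
        rw [hx0]
        field_simp
        try ring
      rw [e8]
    rw [hδ, hg]
    have e9 : Real.log (1 + (1-2*s)^(m+3)) = Real.log (1-s) + Real.log (2 * B s) := by
      rw [hAB s]
      exact Real.log_mul (ne_of_gt (by linarith [hs.2] : (0:ℝ) < 1-s)) (by positivity)
    rw [e9]
    ring
  have hgcont : ContinuousAt g 1 := by
    rw [hg]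
    have hBcont : Continuous B := by
      rw [hB]
      exact continuous_finset_sum _ (fun i _ => by fun_prop)
    refine ContinuousAt.add (ContinuousAt.sub ?_ continuousAt_const) ?_
    · exact ContinuousAt.mul continuousAt_const
        (ContinuousAt.sub continuousAt_const (Real.continuousAt_log (by norm_num)))
    · refine ContinuousAt.log (ContinuousAt.mul continuousAt_const hBcont.continuousAt) ?_
      have : (0:ℝ) < 2 * B 1 := by rw [hB1]; positivity
      exact ne_of_gt this
  have hg1 : g 1 = L := by
    have hbeta : g 1 = (D-1) * (Real.log x0 - Real.log 1) - Real.log D + Real.log (2 * B 1) := rfl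
    rw [hbeta, hLval, hB1, Real.log_one]
    have e10 : Real.log (2*((m:ℝ)+3)) = Real.log 2 + Real.log ((m:ℝ)+3) := by
      rw [Real.log_mul (by norm_num) (by positivity)]
    have e11 : ((m:ℝ)+3) = D := by rw [hD]; push_cast; ring
    rw [e10, e11]
    ring
  have hlim : Tendsto (fun s => deltaTwo 2 (m+3) x0 s) (𝓝[Ioo (0:ℝ) 1] 1) (𝓝 L) := by
    have h1 : Tendsto g (𝓝[Ioo (0:ℝ) 1] 1) (𝓝 L) := by
      have := hgcont.continuousWithinAt (s := Ioo (0:ℝ) 1)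
      rw [ContinuousWithinAt, hg1] at this
      exact this
    refine h1.congr' ?_
    filter_upwards [self_mem_nhdsWithin] with s hs
    exact (heqg s hs).symm
  exact sInf_image_Ioo_eq _ _ 1 (by norm_num) hlb hlim

/-- Values of `δ_{q,d}` at the endpoints: `δ_{q,d}(0) = ln q`;
if `q ≥ 3` or `d` is even then `δ_{q,d}(1) = ρ_{q,d}(1) = ln(1 + (−1)^d (q−1)^{1−d})`;
if `q = 2` and `d` is odd then `δ_{2,d}(x, ·)` is unbounded below on `(0,1)` for every
`x ∈ (1−1/d, 1]` (i.e. `δ_{2,d}(x) = −∞`), and `δ_{2,d}(1−1/d) = ln(2d) − d·H₂(1/d)`. -/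
theorem deltaMin_endpoint_values (q d : ℕ) (hq : 2 ≤ q) (hd : 3 ≤ d) :
    deltaMin q d 0 = Real.log (q : ℝ) ∧
    (3 ≤ q ∨ Even d →
      deltaMin q d 1 = rhoF q d 1 ∧
      rhoF q d 1 = Real.log (1 + (-1 : ℝ) ^ d * ((q : ℝ) - 1) ^ ((1 : ℤ) - (d : ℤ)))) ∧
    (q = 2 ∧ Odd d →
      (∀ x ∈ Set.Ioc (1 - 1 / (d : ℝ)) 1, ∀ M : ℝ,
        ∃ xh ∈ Set.Ioo (0 : ℝ) 1, deltaTwo q d x xh < M) ∧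
      deltaMin q d (1 - 1 / (d : ℝ)) =
        Real.log (2 * (d : ℝ)) - (d : ℝ) * Hent 2 (1 / (d : ℝ))) := by
  refine ⟨part1 q d hq, fun h => part2 q d hq (by omega) h, fun h => ?_⟩
  obtain ⟨rfl, hodd⟩ := h
  exact ⟨part3a d hd hodd, part3b d hd hodd⟩
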